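/- Let m, n be positive integers with m ≤ n, and let (ρ₁₁,…,ρ_mm) be distributed according to the symmetric Dirichlet distribution with parameter n on the m-simplex, i.e., with density (Γ(mn)/Γ(n)^m) Π_j ρ_jj^(n−1) on {ρ_jj ≥ 0, Σ_j ρ_jj = 1}. Then the expected Shannon entropy E[−Σ_{j=1}^m ρ_jj ln ρ_jj] equals H_{mn} − H_n. -/

import Mathlib

open MeasureTheory Real

/-- The standard probability simplex in `ℝ^m`, parametrized by its first `m-1`
coordinates: the last coordinate is `1 - ∑ y j`. -/
def simplexParam (m : ℕ) : Set (Fin (m - 1) → ℝ) :=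
  {y | (∀ j, 0 ≤ y j) ∧ ∑ j, y j ≤ 1}

/-- The density of the symmetric Dirichlet distribution with parameter `n`
on the `m`-simplex, in the first `m-1` coordinates. -/
noncomputable def dirichletDensity (m n : ℕ) (y : Fin (m - 1) → ℝ) : ℝ :=
  (Real.Gamma (m * n) / Real.Gamma n ^ m) *
    ((∏ j, (y j) ^ (n - 1)) * (1 - ∑ j, y j) ^ (n - 1))

/-- The Shannon entropy of the full probability vector `(y₁,…,y_{m-1}, 1-∑ y)`. -/
noncomputable def simplexEntropy (m : ℕ) (y : Fin (m - 1) → ℝ) : ℝ :=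
  -(∑ j, y j * Real.log (y j)) - (1 - ∑ j, y j) * Real.log (1 - ∑ j, y j)


noncomputable def hr (n : ℕ) : ℝ := ((harmonic n : ℚ) : ℝ)

lemma hr_succ (n : ℕ) : hr (n+1) = hr n + ((n:ℝ)+1)⁻¹ := by
  unfold hr
  rw [harmonic_succ]
  push_cast
  ring

lemma cont_pow_log (a : ℕ) (ha : 1 ≤ a) : Continuous fun x : ℝ => x^a * Real.log x := by
  obtain ⟨b, rfl⟩ := Nat.exists_eq_add_of_le ha
  have : (fun x : ℝ => x^(1+b) * Real.log x) = fun x : ℝ => x^b * (x * Real.log x) := by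
    funext x; ring
  rw [this]
  exact (continuous_pow b).mul Real.continuous_mul_log

lemma integral_pow_log (a : ℕ) (ha : 1 ≤ a) :
    ∫ x in (0:ℝ)..1, x^a * Real.log x = -(((a:ℝ)+1)⁻¹)^2 := by
  have hA : ((a:ℝ)+1) ≠ 0 := by positivity
  set F : ℝ → ℝ := fun x => ((a:ℝ)+1)⁻¹ * (x^a * (x * Real.log x)) - ((a:ℝ)+1)⁻¹^2 * x^(a+1)
    with hF
  have hcont : Continuous F := by
    exact ((continuous_const.mul ((continuous_pow a).mul Real.continuous_mul_log)).sub
      (continuous_const.mul (continuous_pow (a+1))))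
  have hderiv : ∀ x ∈ Set.Ioo (0:ℝ) 1, HasDerivAt F (x^a * Real.log x) x := by
    intro x hx
    have hx0 : x ≠ 0 := ne_of_gt hx.1
    have h1 : HasDerivAt (fun x : ℝ => x^(a+1)) (((a:ℝ)+1) * x^a) x := by
      simpa using (hasDerivAt_pow (a+1) x)
    have h2 : HasDerivAt Real.log x⁻¹ x := Real.hasDerivAt_log hx0
    have h3 : HasDerivAt (fun y : ℝ => y^(a+1) * Real.log y)
        ((((a:ℝ)+1) * x^a) * Real.log x + x^(a+1) * x⁻¹) x := h1.mul h2
    have h4 : HasDerivAt F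
        (((a:ℝ)+1)⁻¹ * ((((a:ℝ)+1) * x^a) * Real.log x + x^(a+1) * x⁻¹)
          - ((a:ℝ)+1)⁻¹^2 * (((a:ℝ)+1) * x^a)) x := by
      have h3' : HasDerivAt (fun y : ℝ => y^a * (y * Real.log y))
          ((((a:ℝ)+1) * x^a) * Real.log x + x^(a+1) * x⁻¹) x := by
        have : (fun y : ℝ => y^a * (y * Real.log y)) = fun y : ℝ => y^(a+1) * Real.log y := by
          funext y; ring
        rw [this]; exact h3
      exact (h3'.const_mul _).sub ((h1.const_mul _))
    convert h4 using 1
    have hpow : x^(a+1) * x⁻¹ = x^a := by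
      rw [pow_succ]; field_simp
    rw [hpow]
    field_simp
    ring
  have hint : IntervalIntegrable (fun x : ℝ => x^a * Real.log x) volume 0 1 :=
    (cont_pow_log a ha).intervalIntegrable 0 1
  have := intervalIntegral.integral_eq_sub_of_hasDerivAt_of_le (by norm_num)
    hcont.continuousOn hderiv hint
  rw [this, hF]
  simp [Real.log_one]

lemma betaNat (b a : ℕ) :
    ∫ x in (0:ℝ)..1, x^a*(1-x)^b
      = (a.factorial : ℝ) * b.factorial / (a+b+1).factorial := by
  induction b generalizing a with
  | zero =>
    simp only [pow_zero, mul_one, integral_pow]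
    have : (a+0+1).factorial = (a+1) * a.factorial := by
      simp [Nat.factorial_succ]
    rw [this]
    push_cast
    have : ((a:ℝ)+1) ≠ 0 := by positivity
    have h2 : (a.factorial : ℝ) ≠ 0 := by positivity
    field_simp
    simp
  | succ b ih =>
    have hsplit : ∀ x : ℝ, x^a*(1-x)^(b+1) = x^a*(1-x)^b - x^(a+1)*(1-x)^b := by
      intro x; ring
    rw [intervalIntegral.integral_congr (fun x _ => hsplit x)]
    have c1 : Continuous fun x : ℝ => x^a*(1-x)^b := by fun_prop
    have c2 : Continuous fun x : ℝ => x^(a+1)*(1-x)^b := by fun_prop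
    rw [intervalIntegral.integral_sub (c1.intervalIntegrable 0 1) (c2.intervalIntegrable 0 1)]
    rw [ih a, ih (a+1)]
    have e1 : (a+1+b+1) = (a+b+1)+1 := by omega
    have e2 : (a+(b+1)+1) = (a+b+1)+1 := by omega
    rw [e1, e2, Nat.factorial_succ, Nat.factorial_succ (a+b+1)]
    push_cast [Nat.factorial_succ]
    have h1 : ((a:ℝ)+b+1+1) ≠ 0 := by positivity
    have h2 : ((a:ℝ)+b+1) ≠ 0 := by positivity
    have h3 : ((a+b+1).factorial : ℝ) ≠ 0 := by positivity
    field_simp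
    ring

lemma logBeta (b a : ℕ) (ha : 1 ≤ a) :
    ∫ x in (0:ℝ)..1, x^a*(1-x)^b*Real.log x
      = (a.factorial : ℝ) * b.factorial / (a+b+1).factorial * (hr a - hr (a+b+1)) := by
  induction b generalizing a with
  | zero =>
    simp only [pow_zero, mul_one]
    rw [integral_pow_log a ha]
    have e2 : (a+0+1) = a+1 := by omega
    rw [e2, hr_succ, Nat.factorial_succ]
    push_cast
    have h1 : ((a:ℝ)+1) ≠ 0 := by positivity
    have h3 : (a.factorial : ℝ) ≠ 0 := by positivity
    field_simp
    ring
  | succ b ih =>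
    have hsplit : ∀ x : ℝ, x^a*(1-x)^(b+1)*Real.log x
        = x^a*(1-x)^b*Real.log x - x^(a+1)*(1-x)^b*Real.log x := by
      intro x; ring
    rw [intervalIntegral.integral_congr (fun x _ => hsplit x)]
    have c1 : Continuous fun x : ℝ => x^a*(1-x)^b*Real.log x := by
      have : (fun x : ℝ => x^a*(1-x)^b*Real.log x)
          = fun x : ℝ => (1-x)^b * (x^a*Real.log x) := by funext x; ring
      rw [this]
      exact (by fun_prop : Continuous fun x : ℝ => (1-x)^b).mul (cont_pow_log a ha)
    have c2 : Continuous fun x : ℝ => x^(a+1)*(1-x)^b*Real.log x := by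
      have : (fun x : ℝ => x^(a+1)*(1-x)^b*Real.log x)
          = fun x : ℝ => (1-x)^b * (x^(a+1)*Real.log x) := by funext x; ring
      rw [this]
      exact (by fun_prop : Continuous fun x : ℝ => (1-x)^b).mul
        (cont_pow_log (a+1) (by omega))
    rw [intervalIntegral.integral_sub (c1.intervalIntegrable 0 1) (c2.intervalIntegrable 0 1)]
    rw [ih a ha, ih (a+1) (by omega)]
    have e1 : (a+1+b+1) = (a+b+1)+1 := by omega
    have e2 : (a+(b+1)+1) = (a+b+1)+1 := by omega
    rw [e1, e2, hr_succ a, hr_succ (a+b+1), Nat.factorial_succ (a+b+1), Nat.factorial_succ a, Nat.factorial_succ b]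
    push_cast
    have h1 : ((a:ℝ)+b+1+1) ≠ 0 := by positivity
    have h2 : ((a:ℝ)+b+1) ≠ 0 := by positivity
    have h3 : ((a+b+1).factorial : ℝ) ≠ 0 := by positivity
    have h4 : ((a:ℝ)+1) ≠ 0 := by positivity
    field_simp
    ring

lemma logBeta' (a b : ℕ) (hb : 1 ≤ b) :
    ∫ x in (0:ℝ)..1, x^a*(1-x)^b*Real.log (1-x)
      = (a.factorial : ℝ) * b.factorial / (a+b+1).factorial * (hr b - hr (a+b+1)) := by
  have h1 : ∀ x : ℝ, x^a*(1-x)^b*Real.log (1-x)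
      = (fun y : ℝ => (1-y)^a*y^b*Real.log y) (1 - x) := by
    intro x; simp only; ring_nf
  rw [intervalIntegral.integral_congr (fun x _ => h1 x)]
  rw [intervalIntegral.integral_comp_sub_left (fun y : ℝ => (1-y)^a*y^b*Real.log y) 1]
  norm_num
  have h2 : ∀ x : ℝ, (1-x)^a*x^b*Real.log x = x^b*(1-x)^a*Real.log x := by intro x; ring
  rw [intervalIntegral.integral_congr (fun x _ => h2 x), logBeta a b hb]
  rw [show b+a+1 = a+b+1 from by omega]
  ring

def S (k : ℕ) : Set (Fin k → ℝ) := {y | (∀ j, 0 ≤ y j) ∧ ∑ j, y j ≤ 1}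

lemma isClosed_S (k : ℕ) : IsClosed (S k) := by
  have h1 : IsClosed {y : Fin k → ℝ | ∀ j, 0 ≤ y j} := by
    rw [Set.setOf_forall]
    exact isClosed_iInter fun j => isClosed_le continuous_const (continuous_apply j)
  have h2 : IsClosed {y : Fin k → ℝ | ∑ j, y j ≤ 1} :=
    isClosed_le (by fun_prop) continuous_const
  exact h1.inter h2

lemma measurableSet_S (k : ℕ) : MeasurableSet (S k) := (isClosed_S k).measurableSet

lemma mem_S_le_one {k : ℕ} {y : Fin k → ℝ} (hy : y ∈ S k) (j : Fin k) : y j ≤ 1 := by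
  refine le_trans ?_ hy.2
  exact Finset.single_le_sum (fun i _ => hy.1 i) (Finset.mem_univ j)

lemma isCompact_S (k : ℕ) : IsCompact (S k) := by
  refine Metric.isCompact_of_isClosed_isBounded (isClosed_S k) ?_
  rw [Metric.isBounded_iff_subset_closedBall 0]
  refine ⟨1, fun y hy => ?_⟩
  rw [Metric.mem_closedBall, dist_zero_right]
  rw [pi_norm_le_iff_of_nonneg zero_le_one]
  intro j
  rw [Real.norm_eq_abs, abs_le]
  exact ⟨by linarith [hy.1 j], mem_S_le_one hy j⟩

lemma sum_cons_smul {k : ℕ} (x c : ℝ) (w : Fin k → ℝ) :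
    ∑ j : Fin (k+1), Fin.cons x (c • w) j = x + c * ∑ j, w j := by
  rw [Fin.sum_cons, Finset.mul_sum]
  simp [Pi.smul_apply, smul_eq_mul]

lemma cons_mem_S {k : ℕ} {x : ℝ} (hx : x ∈ Set.Ioo (0:ℝ) 1) (w : Fin k → ℝ) :
    Fin.cons x ((1-x) • w) ∈ S (k+1) ↔ w ∈ S k := by
  have hc : (0:ℝ) < 1 - x := by linarith [hx.2]
  constructor
  · rintro ⟨h1, h2⟩
    constructor
    · intro j
      have := h1 j.succ
      rw [Fin.cons_succ] at this
      simp only [Pi.smul_apply, smul_eq_mul] at this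
      nlinarith
    · rw [sum_cons_smul] at h2
      nlinarith [hx.1]
  · rintro ⟨h1, h2⟩
    constructor
    · intro j
      refine Fin.cases ?_ ?_ j
      · rw [Fin.cons_zero]; exact le_of_lt hx.1
      · intro i
        rw [Fin.cons_succ]
        simp only [Pi.smul_apply, smul_eq_mul]
        exact mul_nonneg (le_of_lt hc) (h1 i)
    · rw [sum_cons_smul]
      nlinarith

lemma key (k : ℕ) (φ : (Fin (k+1) → ℝ) → ℝ) (hφ : Continuous φ) :
    ∫ y in S (k+1), φ y
      = ∫ x in Set.Ioo (0:ℝ) 1, (1-x)^k * ∫ w in S k, φ (Fin.cons x ((1-x) • w)) := by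
  have hSm := measurableSet_S (k+1)
  have hIndInt : Integrable ((S (k+1)).indicator φ) := by
    rw [integrable_indicator_iff hSm]
    exact hφ.continuousOn.integrableOn_compact (isCompact_S _)
  rw [← MeasureTheory.integral_indicator hSm]
  have hmp := ((measurePreserving_piFinSuccAbove (fun _ : Fin (k+1) => (volume : Measure ℝ)) 0).symm)
  rw [volume_pi, ← hmp.integral_comp']
  have hcons : ∀ p : ℝ × (Fin k → ℝ),
      ((MeasurableEquiv.piFinSuccAbove (fun _ : Fin (k+1) => ℝ) 0).symm p) = Fin.cons p.1 p.2 := by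
    intro p
    simp [MeasurableEquiv.piFinSuccAbove_symm_apply, Fin.insertNthEquiv, Fin.insertNth_zero']
  simp only [hcons]
  have hint2 : Integrable (fun p : ℝ × (Fin k → ℝ) => (S (k+1)).indicator φ (Fin.cons p.1 p.2))
      ((volume : Measure ℝ).prod (Measure.pi fun _ : Fin k => volume)) := by
    have h := (hmp.integrable_comp_emb (MeasurableEquiv.measurableEmbedding _)).2
      (by rw [← volume_pi] at *; exact hIndInt)
    simpa only [Function.comp_def, hcons] using h
  rw [MeasureTheory.integral_prod _ hint2]
  have hpoint : ∀ x : ℝ, x ≠ 0 → x ≠ 1 →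
      (∫ z, (S (k+1)).indicator φ (Fin.cons x z) ∂(Measure.pi fun _ : Fin k => volume))
      = (Set.Ioo (0:ℝ) 1).indicator
          (fun x => (1-x)^k * ∫ w in S k, φ (Fin.cons x ((1-x) • w))) x := by
    intro x hx0 hx1
    by_cases hx : x ∈ Set.Ioo (0:ℝ) 1
    · rw [Set.indicator_of_mem hx]
      have hc : (0:ℝ) < 1 - x := by have := hx.2; linarith
      rw [← volume_pi]
      have hsmul := MeasureTheory.Measure.integral_comp_smul
        (μ := (volume : Measure (Fin k → ℝ)))
        (fun z => (S (k+1)).indicator φ (Fin.cons x z)) (1-x)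
      rw [Module.finrank_fin_fun] at hsmul
      have habs : |(((1-x)^k : ℝ))⁻¹| = ((1-x)^k)⁻¹ := by
        rw [abs_of_nonneg]; positivity
      rw [habs, smul_eq_mul] at hsmul
      have hpk : ((1-x):ℝ)^k ≠ 0 := by positivity
      have : (∫ z, (S (k+1)).indicator φ (Fin.cons x z))
          = (1-x)^k * ∫ w, (S (k+1)).indicator φ (Fin.cons x ((1-x) • w)) := by
        rw [hsmul]; field_simp
      rw [this]
      congr 1
      have hind : (fun w : Fin k → ℝ => (S (k+1)).indicator φ (Fin.cons x ((1-x) • w)))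
          = (S k).indicator (fun w => φ (Fin.cons x ((1-x) • w))) := by
        funext w
        by_cases hw : w ∈ S k
        · rw [Set.indicator_of_mem hw, Set.indicator_of_mem ((cons_mem_S hx w).2 hw)]
        · rw [Set.indicator_of_notMem hw,
            Set.indicator_of_notMem (fun h => hw ((cons_mem_S hx w).1 h))]
      rw [hind, MeasureTheory.integral_indicator (measurableSet_S k)]
    · rw [Set.indicator_of_notMem hx]
      have hz : ∀ z : Fin k → ℝ, Fin.cons x z ∉ S (k+1) := by
        intro z hmem
        simp only [Set.mem_Ioo, not_and_or, not_lt] at hx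
        rcases hx with h | h
        · have hx0' : x < 0 := lt_of_le_of_ne h hx0
          have := hmem.1 0
          rw [Fin.cons_zero] at this
          linarith
        · have hx1' : 1 < x := lt_of_le_of_ne h (Ne.symm hx1)
          have hsum := hmem.2
          rw [Fin.sum_cons] at hsum
          have : (0:ℝ) ≤ ∑ j, z j := by
            refine Finset.sum_nonneg fun j _ => ?_
            have := hmem.1 j.succ
            rwa [Fin.cons_succ] at this
          linarith
      have : (fun z : Fin k → ℝ => (S (k+1)).indicator φ (Fin.cons x z)) = fun _ => 0 := by
        funext z; exact Set.indicator_of_notMem (hz z) _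
      rw [this]
      simp
  rw [← MeasureTheory.integral_indicator measurableSet_Ioo]
  refine integral_congr_ae ?_
  have h01 : volume ({0,1} : Set ℝ) = 0 :=
    (Set.toFinite ({0,1} : Set ℝ)).measure_zero _
  refine (MeasureTheory.ae_iff).2 (measure_mono_null ?_ h01)
  intro x hx
  simp only [Set.mem_setOf_eq] at hx
  by_contra h
  simp only [Set.mem_insert_iff, Set.mem_singleton_iff, not_or] at h
  exact hx (hpoint x h.1 h.2)

noncomputable def Pd (p k : ℕ) (y : Fin k → ℝ) : ℝ := (∏ j, y j ^ p) * (1 - ∑ j, y j)^p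

lemma contPd (p k : ℕ) : Continuous (Pd p k) := by unfold Pd; fun_prop

lemma S_zero : S 0 = Set.univ := by
  ext y
  simp [S]

lemma integral_S_zero (f : (Fin 0 → ℝ) → ℝ) :
    ∫ y in S 0, f y = f (fun i => i.elim0) := by
  rw [S_zero, MeasureTheory.Measure.restrict_univ]
  have : f = fun _ => f (fun i => i.elim0) := by
    funext y
    congr
    funext i
    exact i.elim0
  rw [this, MeasureTheory.integral_const]
  have : (volume : Measure (Fin 0 → ℝ)) Set.univ = 1 := by
    rw [volume_pi, Measure.pi_univ]
    simp
  rw [measureReal_def, this]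
  simp

lemma pd_cons (p k : ℕ) (x : ℝ) (w : Fin k → ℝ) :
    Pd p (k+1) (Fin.cons x ((1-x) • w)) = x^p * (1-x)^((k+1)*p) * Pd p k w := by
  unfold Pd
  rw [Fin.prod_univ_succ, sum_cons_smul]
  simp only [Fin.cons_zero, Fin.cons_succ]
  have h1 : ∏ j : Fin k, ((1-x) • w) j ^ p = (1-x)^(k*p) * ∏ j, w j ^ p := by
    simp only [Pi.smul_apply, smul_eq_mul, mul_pow]
    rw [Finset.prod_mul_distrib, Finset.prod_const]
    rw [Finset.card_univ, Fintype.card_fin, ← pow_mul, mul_comm p k]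
  have h2 : (1 - (x + (1-x) * ∑ j, w j)) = (1-x) * (1 - ∑ j, w j) := by ring
  rw [h1, h2, mul_pow, show (k+1)*p = k*p+p from by ring, pow_add]
  ring
lemma normS (p : ℕ) : ∀ k, ∫ y in S k, Pd p k y
    = (p.factorial : ℝ)^(k+1) / (k*(p+1)+p).factorial := by
  intro k
  induction k with
  | zero =>
    rw [integral_S_zero]
    unfold Pd
    simp
    have : (p.factorial : ℝ) ≠ 0 := by positivity
    field_simp
  | succ k ih =>
    rw [key k (Pd p (k+1)) (contPd p (k+1))]
    have hfun : ∀ x ∈ Set.Ioo (0:ℝ) 1,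
        (1-x)^k * ∫ w in S k, Pd p (k+1) (Fin.cons x ((1-x) • w))
        = x^p * (1-x)^(k*(p+1)+p) * ∫ w in S k, Pd p k w := by
      intro x _
      have : ∀ w : Fin k → ℝ, Pd p (k+1) (Fin.cons x ((1-x) • w))
          = (x^p * (1-x)^((k+1)*p)) * Pd p k w := fun w => pd_cons p k x w
      simp_rw [this]
      rw [MeasureTheory.integral_const_mul]
      rw [← mul_assoc]
      congr 1
      rw [show k*(p+1)+p = (k+1)*p + k by ring, pow_add]
      ring
    rw [MeasureTheory.setIntegral_congr_fun measurableSet_Ioo hfun]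
    rw [ih]
    have hioo : ∫ x in Set.Ioo (0:ℝ) 1,
          x^p * (1-x)^(k*(p+1)+p) * ((p.factorial : ℝ)^(k+1) / (k*(p+1)+p).factorial)
        = (∫ x in (0:ℝ)..1, x^p * (1-x)^(k*(p+1)+p)) * ((p.factorial : ℝ)^(k+1) / (k*(p+1)+p).factorial) := by
      rw [intervalIntegral.integral_of_le zero_le_one, ← MeasureTheory.integral_Ioc_eq_integral_Ioo,
        ← MeasureTheory.integral_mul_const]
    rw [hioo, betaNat]
    have e1 : p + (k*(p+1)+p) + 1 = (k+1)*(p+1)+p := by ring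
    rw [e1]
    have h1 : ((k*(p+1)+p).factorial : ℝ) ≠ 0 := by positivity
    have h2 : (((k+1)*(p+1)+p).factorial : ℝ) ≠ 0 := by positivity
    field_simp
    ring

noncomputable def Ed (k : ℕ) (y : Fin k → ℝ) : ℝ :=
  -(∑ j, y j * Real.log (y j)) - (1 - ∑ j, y j) * Real.log (1 - ∑ j, y j)

lemma contEd (k : ℕ) : Continuous (Ed k) := by
  unfold Ed
  have h1 : Continuous fun y : Fin k → ℝ => ∑ j, y j * Real.log (y j) := by
    refine continuous_finset_sum _ fun j _ => ?_
    exact Real.continuous_mul_log.comp (continuous_apply j)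
  have h2 : Continuous fun y : Fin k → ℝ => (1 - ∑ j, y j) * Real.log (1 - ∑ j, y j) := by
    exact Real.continuous_mul_log.comp (by fun_prop)
  exact (h1.neg).sub h2

lemma mul_log_mul (c t : ℝ) (hc : 0 < c) (ht : 0 ≤ t) :
    (c*t) * Real.log (c*t) = c*t*Real.log c + c*(t*Real.log t) := by
  rcases eq_or_lt_of_le ht with h|h
  · simp [← h]
  · rw [Real.log_mul (ne_of_gt hc) (ne_of_gt h)]; ring

lemma ed_cons (k : ℕ) {x : ℝ} (hx : x ∈ Set.Ioo (0:ℝ) 1) {w : Fin k → ℝ} (hw : w ∈ S k) :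
    Ed (k+1) (Fin.cons x ((1-x) • w))
      = (-(x * Real.log x) - (1-x) * Real.log (1-x)) + (1-x) * Ed k w := by
  have hc : (0:ℝ) < 1 - x := by have := hx.2; linarith
  have hs : (0:ℝ) ≤ 1 - ∑ j, w j := by linarith [hw.2]
  unfold Ed
  rw [Fin.sum_univ_succ, sum_cons_smul]
  simp only [Fin.cons_zero, Fin.cons_succ, Pi.smul_apply, smul_eq_mul]
  have hterm : ∀ j : Fin k, (1-x) * w j * Real.log ((1-x) * w j)
      = (1-x) * w j * Real.log (1-x) + (1-x) * (w j * Real.log (w j)) :=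
    fun j => mul_log_mul (1-x) (w j) hc (hw.1 j)
  have hsum : ∑ j, (1-x) * w j * Real.log ((1-x) * w j)
      = (1-x)*Real.log (1-x) * (∑ j, w j) + (1-x) * ∑ j, w j * Real.log (w j) := by
    rw [Finset.sum_congr rfl (fun j _ => hterm j), Finset.sum_add_distrib, ← Finset.mul_sum]
    congr 1
    have : ∀ j : Fin k, (1-x) * w j * Real.log (1-x) = ((1-x)*Real.log (1-x)) * w j :=
      fun j => by ring
    rw [Finset.sum_congr rfl (fun j _ => this j), ← Finset.mul_sum]
  have e3 : (1 - (x + (1-x) * ∑ j, w j)) = (1-x)*(1 - ∑ j, w j) := by ring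
  rw [hsum, e3, mul_log_mul (1-x) _ hc hs]
  ring

lemma mainT (p : ℕ) : ∀ k, ∫ y in S k, Pd p k y * Ed k y
    = (p.factorial : ℝ)^(k+1) / (k*(p+1)+p).factorial * (hr ((k+1)*(p+1)) - hr (p+1)) := by
  intro k
  induction k with
  | zero =>
    rw [integral_S_zero]
    unfold Pd Ed
    simp
  | succ k ih =>
    set B := k*(p+1)+p with hB
    have hN := normS p k
    set N := ∫ y in S k, Pd p k y with hNdef
    set T := ∫ y in S k, Pd p k y * Ed k y with hTdef
    have hcont : Continuous (fun y => Pd p (k+1) y * Ed (k+1) y) :=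
      (contPd p (k+1)).mul (contEd (k+1))
    rw [key k _ hcont]
    have hIntP : IntegrableOn (Pd p k) (S k) :=
      (contPd p k).continuousOn.integrableOn_compact (isCompact_S k)
    have hIntPE : IntegrableOn (fun w => Pd p k w * Ed k w) (S k) :=
      ((contPd p k).mul (contEd k)).continuousOn.integrableOn_compact (isCompact_S k)
    have houter : ∀ x ∈ Set.Ioo (0:ℝ) 1,
        (1-x)^k * ∫ w in S k, Pd p (k+1) (Fin.cons x ((1-x) • w)) * Ed (k+1) (Fin.cons x ((1-x) • w))
        = N * (-(x^(p+1)*(1-x)^B*Real.log x) - x^p*(1-x)^(B+1)*Real.log (1-x))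
          + T * (x^p*(1-x)^(B+1)) := by
      intro x hx
      have hinner : ∫ w in S k, Pd p (k+1) (Fin.cons x ((1-x) • w)) * Ed (k+1) (Fin.cons x ((1-x) • w))
          = (x^p*(1-x)^((k+1)*p)) *
            ((-(x * Real.log x) - (1-x) * Real.log (1-x)) * N + (1-x) * T) := by
        have hpt : ∀ w ∈ S k,
            Pd p (k+1) (Fin.cons x ((1-x) • w)) * Ed (k+1) (Fin.cons x ((1-x) • w))
            = (x^p*(1-x)^((k+1)*p)) *
              ((-(x * Real.log x) - (1-x) * Real.log (1-x)) * Pd p k w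
                + (1-x) * (Pd p k w * Ed k w)) := by
          intro w hw
          rw [pd_cons p k x w, ed_cons k hx hw]
          ring
        rw [MeasureTheory.setIntegral_congr_fun (measurableSet_S k) hpt]
        rw [MeasureTheory.integral_const_mul]
        congr 1
        rw [MeasureTheory.integral_add ((hIntP.const_mul _)) ((hIntPE.const_mul _)),
          MeasureTheory.integral_const_mul, MeasureTheory.integral_const_mul]
      rw [hinner]
      rw [hB, show k*(p+1)+p = (k+1)*p + k from by ring, pow_add, pow_succ]
      ring
    rw [MeasureTheory.setIntegral_congr_fun measurableSet_Ioo houter]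
    rw [← MeasureTheory.integral_Ioc_eq_integral_Ioo, ← intervalIntegral.integral_of_le zero_le_one]
    have c1 : Continuous fun x : ℝ => -(x^(p+1)*(1-x)^B*Real.log x) - x^p*(1-x)^(B+1)*Real.log (1-x) := by
      have ca : Continuous fun x : ℝ => x^(p+1)*(1-x)^B*Real.log x := by
        have : (fun x : ℝ => x^(p+1)*(1-x)^B*Real.log x)
            = fun x : ℝ => (1-x)^B * (x^(p+1)*Real.log x) := by funext x; ring
        rw [this]
        exact (by fun_prop : Continuous fun x : ℝ => (1-x)^B).mul (cont_pow_log (p+1) (by omega))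
      have cb : Continuous fun x : ℝ => x^p*(1-x)^(B+1)*Real.log (1-x) := by
        have : (fun x : ℝ => x^p*(1-x)^(B+1)*Real.log (1-x))
            = fun x : ℝ => x^p * ((1-x)^(B+1)*Real.log (1-x)) := by funext x; ring
        rw [this]
        refine (continuous_pow p).mul ?_
        exact (cont_pow_log (B+1) (by omega)).comp (by fun_prop)
      exact ca.neg.sub cb
    have c2 : Continuous fun x : ℝ => x^p*(1-x)^(B+1) := by fun_prop
    have c1a : Continuous fun x : ℝ => x^(p+1)*(1-x)^B*Real.log x := by
      have : (fun x : ℝ => x^(p+1)*(1-x)^B*Real.log x)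
          = fun x : ℝ => (1-x)^B * (x^(p+1)*Real.log x) := by funext x; ring
      rw [this]
      exact (by fun_prop : Continuous fun x : ℝ => (1-x)^B).mul (cont_pow_log (p+1) (by omega))
    have c1b : Continuous fun x : ℝ => x^p*(1-x)^(B+1)*Real.log (1-x) := by
      have : (fun x : ℝ => x^p*(1-x)^(B+1)*Real.log (1-x))
          = fun x : ℝ => x^p * ((1-x)^(B+1)*Real.log (1-x)) := by funext x; ring
      rw [this]
      exact (continuous_pow p).mul ((cont_pow_log (B+1) (by omega)).comp (by fun_prop))
    rw [intervalIntegral.integral_add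
      ((c1.intervalIntegrable 0 1).const_mul N) ((c2.intervalIntegrable 0 1).const_mul T)]
    rw [intervalIntegral.integral_const_mul, intervalIntegral.integral_const_mul]
    rw [intervalIntegral.integral_sub (f := fun x : ℝ => -(x^(p+1)*(1-x)^B*Real.log x))
      ((c1a.neg).intervalIntegrable 0 1) (c1b.intervalIntegrable 0 1)]
    rw [intervalIntegral.integral_neg]
    rw [logBeta B (p+1) (by omega), logBeta' p (B+1) (by omega), betaNat (B+1) p]
    rw [ih, hN]
    rw [show (p+1)+B+1 = B+p+2 from by omega, show p+(B+1)+1 = B+p+2 from by omega,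
      show (k+1)*(p+1) = B+1 from by rw [hB]; ring,
      show B+1+p = B+p+1 from by omega,
      show (k+1+1)*(p+1) = B+p+2 from by rw [hB]; ring]
    rw [show (B+p+2) = (B+p+1)+1 from rfl, Nat.factorial_succ (B+p+1),
      Nat.factorial_succ B, Nat.factorial_succ p]
    push_cast
    have h1 : ((B+p+1).factorial : ℝ) ≠ 0 := by positivity
    have h2 : ((B:ℝ)+p+1+1) ≠ 0 := by positivity
    have h3 : (B.factorial : ℝ) ≠ 0 := by positivity
    have h4 : (p.factorial : ℝ) ≠ 0 := by positivity
    field_simp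
    ring

theorem average_dirichlet_entropy (m n : ℕ) (hm : 1 ≤ m) (hmn : m ≤ n) :
    ∫ y in simplexParam m, dirichletDensity m n y * simplexEntropy m y =
      (harmonic (m * n) : ℝ) - (harmonic n : ℝ) := by
  obtain ⟨k, rfl⟩ := Nat.exists_eq_succ_of_ne_zero (by omega : m ≠ 0)
  obtain ⟨p, rfl⟩ := Nat.exists_eq_succ_of_ne_zero (by omega : n ≠ 0)
  set C : ℝ := Real.Gamma (((k+1:ℕ):ℝ) * ((p+1:ℕ):ℝ)) / Real.Gamma (((p+1:ℕ)):ℝ) ^ (k+1)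
    with hC
  have hd : dirichletDensity (k+1) (p+1) = fun y : Fin k → ℝ => C * Pd p k y := rfl
  have hE : simplexEntropy (k+1) = Ed k := rfl
  have hSP : simplexParam (k+1) = S k := rfl
  rw [hd, hE, hSP]
  simp only [mul_assoc]
  rw [MeasureTheory.integral_const_mul]
  show C * ∫ y in S k, Pd p k y * Ed k y
      = ((harmonic ((k+1) * (p+1)) : ℚ) : ℝ) - ((harmonic (p+1) : ℚ) : ℝ)
  rw [mainT p k]
  have hg1 : Real.Gamma (((k+1:ℕ):ℝ) * ((p+1:ℕ):ℝ)) = (k*(p+1)+p).factorial := by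
    rw [show ((k+1:ℕ):ℝ) * ((p+1:ℕ):ℝ) = ((k*(p+1)+p : ℕ) : ℝ) + 1 from by push_cast; ring,
      Real.Gamma_nat_eq_factorial]
  have hg2 : Real.Gamma (((p+1:ℕ)):ℝ) = p.factorial := by
    rw [show ((p+1 : ℕ) : ℝ) = ((p : ℕ) : ℝ) + 1 from by push_cast; ring,
      Real.Gamma_nat_eq_factorial]
  rw [hC, hg1, hg2]
  have h1 : ((k*(p+1)+p).factorial : ℝ) ≠ 0 := by positivity
  have h2 : (p.factorial : ℝ) ≠ 0 := by positivity
  have hh : ((harmonic ((k+1) * (p+1)) : ℚ) : ℝ) = hr ((k+1)*(p+1)) := rfl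
  have hh2 : ((harmonic (p+1) : ℚ) : ℝ) = hr (p+1) := rfl
  rw [hh, hh2]
  field_simp
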